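/- For all integers n > k ≥ 0, the identity sum_{i=0}^{k} C(n-k-1+i, i) C(n, k-i) q^i = sum_{j=0}^{k} C(n-k-1+j, j) (1+q)^j holds in the polynomial ring Z[q]. -/

import Mathlib

open scoped BigOperators

/-- Number of sign changes between consecutive entries of a list of reals. -/
noncomputable def listVar : List ℝ → ℕ
  | a :: b :: t => (if a * b < 0 then 1 else 0) + listVar (b :: t)
  | _ => 0

/-- `var v` : the number of sign changes of `v`, ignoring zero entries. -/
noncomputable def var {n : ℕ} (v : Fin n → ℝ) : ℕ :=
  listVar ((List.ofFn v).filter (fun x => x ≠ 0))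

/-- `varbar v` : the maximum of `var w` over all `w` agreeing with `v` on the
nonzero entries of `v`. -/
noncomputable def varbar {n : ℕ} (v : Fin n → ℝ) : ℕ :=
  sSup {m | ∃ w : Fin n → ℝ, (∀ i, v i ≠ 0 → w i = v i) ∧ var w = m}

/-- `altv v = (v 0, -v 1, v 2, ...)`. -/
def altv {n : ℕ} (v : Fin n → ℝ) : Fin n → ℝ := fun i => (-1 : ℝ) ^ (i : ℕ) * v i

/-- A vector with entries in `{0, 1, -1}`, representing a sign vector. -/
def IsSignVec {n : ℕ} (σ : Fin n → ℝ) : Prop := ∀ i, σ i = 0 ∨ σ i = 1 ∨ σ i = -1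


lemma hockey (a b : ℕ) (hab : a ≤ b) :
    ∀ m, ∑ j ∈ Finset.range m, (a + j).choose b = (a + m).choose (b + 1)
  | 0 => by
      rw [Finset.sum_range_zero, Nat.add_zero, Nat.choose_eq_zero_of_lt (by omega)]
  | (m + 1) => by
      rw [Finset.sum_range_succ, hockey a b hab m,
        show a + (m + 1) = (a + m) + 1 from rfl, Nat.choose_succ_succ, Nat.add_comm]

lemma termeq (a j i : ℕ) :
    (a + j).choose j * j.choose i = (a + i).choose i * (a + j).choose (a + i) := by
  rcases le_or_gt i j with hij | hij
  · have h1 := Nat.choose_mul (n := a + j) (show a ≤ a + i by omega)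
    simp only [Nat.add_sub_cancel_left] at h1
    rw [← Nat.choose_symm_add (a := a) (b := j), ← Nat.choose_symm_add (a := a) (b := i),
      ← h1, Nat.mul_comm]
  · rw [Nat.choose_eq_zero_of_lt hij,
      Nat.choose_eq_zero_of_lt (show a + j < a + i by omega)]
    simp

lemma key (a k i : ℕ) :
    ∑ j ∈ Finset.range (k + 1), (a + j).choose j * j.choose i
      = (a + i).choose i * (a + (k + 1)).choose (a + i + 1) := by
  have : ∀ j ∈ Finset.range (k+1), (a + j).choose j * j.choose i
      = (a + i).choose i * (a + j).choose (a + i) := fun j _ => termeq a j i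
  rw [Finset.sum_congr rfl this, ← Finset.mul_sum, hockey a (a + i) (by omega)]


open Polynomial in
theorem stmt13 (n k : ℕ) (h : k < n) :
    (∑ i ∈ Finset.range (k + 1),
        (C (((n - k - 1 + i).choose i * n.choose (k - i) : ℕ) : ℤ)) * X ^ i) =
    ∑ j ∈ Finset.range (k + 1),
        (C (((n - k - 1 + j).choose j : ℕ) : ℤ)) * (1 + X) ^ j := by
  have hkey : ∀ i, i < k + 1 →
      ((n - k - 1 + i).choose i * n.choose (k - i))
        = ∑ j ∈ Finset.range (k + 1), (n - k - 1 + j).choose j * j.choose i := by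
    intro i hi
    rw [key (n - k - 1) k i]
    congr 1
    rw [show n - k - 1 + (k + 1) = n by omega,
      ← Nat.choose_symm (show n - k - 1 + i + 1 ≤ n by omega)]
    congr 1; omega
  have expand : ∀ j : ℕ, ((1 : ℤ[X]) + X) ^ j
      = ∑ i ∈ Finset.range (j + 1), (C (j.choose i : ℤ)) * X ^ i := by
    intro j
    rw [add_comm, add_pow]
    refine Finset.sum_congr rfl fun i _ => ?_
    rw [one_pow, mul_one, mul_comm]
    congr 1
  calc (∑ i ∈ Finset.range (k + 1),
        (C (((n - k - 1 + i).choose i * n.choose (k - i) : ℕ) : ℤ)) * X ^ i)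
      = ∑ i ∈ Finset.range (k + 1), ∑ j ∈ Finset.range (k + 1),
          (C (((n - k - 1 + j).choose j * j.choose i : ℕ) : ℤ)) * X ^ i := by
        refine Finset.sum_congr rfl fun i hi => ?_
        rw [hkey i (Finset.mem_range.mp hi), Nat.cast_sum, map_sum, Finset.sum_mul]
    _ = ∑ j ∈ Finset.range (k + 1), ∑ i ∈ Finset.range (k + 1),
          (C (((n - k - 1 + j).choose j * j.choose i : ℕ) : ℤ)) * X ^ i := Finset.sum_comm
    _ = ∑ j ∈ Finset.range (k + 1),
        (C (((n - k - 1 + j).choose j : ℕ) : ℤ)) * (1 + X) ^ j := by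
        refine Finset.sum_congr rfl fun j hj => ?_
        have hjk : j + 1 ≤ k + 1 := by simp only [Finset.mem_range] at hj; omega
        have h2 : (C (((n - k - 1 + j).choose j : ℕ) : ℤ)) * (1 + X) ^ j
            = ∑ i ∈ Finset.range (j + 1),
              (C (((n - k - 1 + j).choose j * j.choose i : ℕ) : ℤ)) * X ^ i := by
          rw [expand j, Finset.mul_sum]
          refine Finset.sum_congr rfl fun i _ => ?_
          rw [Nat.cast_mul, map_mul]; ring
        rw [h2]
        refine (Finset.sum_subset (Finset.range_subset_range.mpr hjk) ?_).symm
        intro i hik hij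
        simp only [Finset.mem_range, not_lt] at hik hij
        rw [Nat.choose_eq_zero_of_lt (show j < i by omega)]
        simp
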